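/- Let k be a field with characteristic ≠ 2 and let A, B be 2×2 matrices over k. Suppose there are nonzero λ_A, λ_B ∈ k with A·A = λ_A²·I and B·B = λ_B²·I, that neither A nor B is a scalar multiple of the identity matrix, that A·B is not a scalar multiple of the identity matrix, and that A·B = c·(B·A) for some c ∈ k. Then (A·B)·(A·B) = −λ_A²·λ_B²·I (so c = −1 and the eigenvalues of AB are ±√(−1)·λ_A·λ_B). -/
import Mathlib

private lemma traceless_of_sq_scalar {k : Type*} [Field k]
    (M : Matrix (Fin 2) (Fin 2) k) (l : k)
    (h : M * M = l • (1 : Matrix (Fin 2) (Fin 2) k))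
    (hns : ¬ ∃ c : k, M = c • (1 : Matrix (Fin 2) (Fin 2) k)) :
    M 1 1 = - M 0 0 := by
  have e00 := congrFun (congrFun h 0) 0
  have e01 := congrFun (congrFun h 0) 1
  have e10 := congrFun (congrFun h 1) 0
  have e11 := congrFun (congrFun h 1) 1
  simp [Matrix.mul_apply, Fin.sum_univ_two, Matrix.one_apply] at e00 e01 e10 e11
  by_contra hne
  have hsum : M 0 0 + M 1 1 ≠ 0 := fun hs => hne (by linear_combination hs)
  have hb : M 0 1 = 0 := by
    rcases mul_eq_zero.mp (show M 0 1 * (M 0 0 + M 1 1) = 0 by linear_combination e01) with h' | h'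
    · exact h'
    · exact absurd h' hsum
  have hc : M 1 0 = 0 := by
    rcases mul_eq_zero.mp (show M 1 0 * (M 0 0 + M 1 1) = 0 by linear_combination e10) with h' | h'
    · exact h'
    · exact absurd h' hsum
  have had : M 0 0 = M 1 1 := by
    rcases mul_eq_zero.mp (show (M 0 0 - M 1 1) * (M 0 0 + M 1 1) = 0 by
      linear_combination e00 - e11) with h' | h'
    · exact sub_eq_zero.mp h'
    · exact absurd h' hsum
  exact hns ⟨M 0 0, by
    ext i j
    fin_cases i <;> fin_cases j <;>
      simp [Matrix.one_apply, hb, hc, had]⟩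

theorem long_automorphisms_product_square
    {k : Type*} [Field k] (hchar : ringChar k ≠ 2)
    (A B : Matrix (Fin 2) (Fin 2) k) (lA lB : k)
    (hlA : lA ≠ 0) (hlB : lB ≠ 0)
    (hA : A * A = (lA ^ 2) • (1 : Matrix (Fin 2) (Fin 2) k))
    (hB : B * B = (lB ^ 2) • (1 : Matrix (Fin 2) (Fin 2) k))
    (hAns : ¬ ∃ c : k, A = c • (1 : Matrix (Fin 2) (Fin 2) k))
    (hBns : ¬ ∃ c : k, B = c • (1 : Matrix (Fin 2) (Fin 2) k))
    (hABns : ¬ ∃ c : k, A * B = c • (1 : Matrix (Fin 2) (Fin 2) k))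
    (hcomm : ∃ c : k, A * B = c • (B * A)) :
    (A * B) * (A * B) = (-(lA ^ 2 * lB ^ 2)) • (1 : Matrix (Fin 2) (Fin 2) k) := by
  obtain ⟨c, hc⟩ := hcomm
  have tA : A 1 1 = - A 0 0 := traceless_of_sq_scalar A _ hA hAns
  have tB : B 1 1 = - B 0 0 := traceless_of_sq_scalar B _ hB hBns
  -- AB + BA is scalar
  have hS : A * B + B * A = (2 * (A 0 0 * B 0 0) + A 0 1 * B 1 0 + A 1 0 * B 0 1) •
      (1 : Matrix (Fin 2) (Fin 2) k) := by
    ext i j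
    fin_cases i <;> fin_cases j <;>
      simp [Matrix.mul_apply, Fin.sum_univ_two, Matrix.one_apply, tA, tB] <;> ring
  set t := 2 * (A 0 0 * B 0 0) + A 0 1 * B 1 0 + A 1 0 * B 0 1 with ht
  -- c = -1
  have hcm1 : c = -1 := by
    by_contra hcne
    have h1c : c + 1 ≠ 0 := fun h => hcne (by linear_combination h)
    have hBA : (c + 1) • (B * A) = t • (1 : Matrix (Fin 2) (Fin 2) k) := by
      calc (c + 1) • (B * A) = c • (B * A) + B * A := by
            rw [add_smul, one_smul]
          _ = A * B + B * A := by rw [hc]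
          _ = t • 1 := hS
    have : B * A = ((c + 1)⁻¹ * t) • (1 : Matrix (Fin 2) (Fin 2) k) := by
      rw [mul_smul, ← hBA, smul_smul, inv_mul_cancel₀ h1c, one_smul]
    exact hABns ⟨c * ((c + 1)⁻¹ * t), by rw [hc, this, smul_smul]⟩
  -- now AB = -(BA)
  have hBA : B * A = -(A * B) := by
    rw [hc, hcm1, neg_one_smul, neg_neg]
  calc (A * B) * (A * B) = A * (B * A) * B := by noncomm_ring
    _ = A * (-(A * B)) * B := by rw [hBA]
    _ = -((A * A) * (B * B)) := by noncomm_ring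
    _ = (-(lA ^ 2 * lB ^ 2)) • (1 : Matrix (Fin 2) (Fin 2) k) := by
        rw [hA, hB, smul_mul_assoc, mul_smul_comm, smul_smul, one_mul, neg_smul]
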